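/- The pair-splitting number 𝔰_pair is at most the subseries number ß. That is, if 𝓘 is a family of infinite sets of natural numbers such that for every conditionally convergent real series ∑ r_i there is I ∈ 𝓘 with ∑_{i ∈ I} r_i divergent, then 𝓘 has cardinality at least 𝔰_pair. -/

import Mathlib

open Filter Cardinal

/-- Conditional convergence of a real series. -/
def CondConv (a : ℕ → ℝ) : Prop :=
  (∃ l : ℝ, Tendsto (fun N : ℕ => ∑ i ∈ Finset.range N, a i) atTop (nhds l)) ∧
  ¬ Summable (fun i => |a i|)

/-- `A` is an unbounded set of pairs of natural numbers (pairs `p` with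
`p.1 < p.2`, reaching arbitrarily high). -/
def UnboundedPairs (A : Set (ℕ × ℕ)) : Prop :=
  (∀ p ∈ A, p.1 < p.2) ∧ ∀ k : ℕ, ∃ p ∈ A, k ≤ p.1

/-- `X` pair-splits `A`: infinitely many pairs of `A` have exactly one
element in `X`. -/
def PairSplits (X : Set ℕ) (A : Set (ℕ × ℕ)) : Prop :=
  {p ∈ A | ¬ (p.1 ∈ X ↔ p.2 ∈ X)}.Infinite

/-- The pair-splitting number `𝔰_pair`. -/
noncomputable def sPair : Cardinal :=
  sInf {c : Cardinal | ∃ F : Set (Set ℕ), (∀ X ∈ F, X.Infinite) ∧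
    (∀ A : Set (ℕ × ℕ), UnboundedPairs A → ∃ X ∈ F, PairSplits X A) ∧ #F = c}

namespace SPairAux

noncomputable def w (n : ℕ) : ℝ := 1 / ((n : ℝ) + 1)

lemma w_pos (n : ℕ) : 0 < w n := by unfold w; positivity

lemma w_le {m n : ℕ} (h : m ≤ n) : w n ≤ w m := by
  unfold w
  apply one_div_le_one_div_of_le
  · positivity
  · have : (m:ℝ) ≤ n := Nat.cast_le.mpr h
    linarith

open Classical in
noncomputable def r (a b : ℕ → ℕ) (m : ℕ) : ℝ :=
  ∑ n ∈ Finset.range (m + 1),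
    ((if a n = m then w n else 0) - (if b n = m then w n else 0))

open Classical in
noncomputable def cterm (a b : ℕ → ℕ) (I : Set ℕ) (N n : ℕ) : ℝ :=
  (if a n ∈ I ∧ a n < N then w n else 0) - (if b n ∈ I ∧ b n < N then w n else 0)

open Classical in
noncomputable def dterm (a b : ℕ → ℕ) (I : Set ℕ) (n : ℕ) : ℝ :=
  (if a n ∈ I then w n else 0) - (if b n ∈ I then w n else 0)

section
variable {a b : ℕ → ℕ}

lemma a_mono (h1 : ∀ n, a n < b n) (h2 : ∀ n, b n < a (n + 1)) : StrictMono a :=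
  strictMono_nat_of_lt_succ fun n => (h1 n).trans (h2 n)

lemma b_mono (h1 : ∀ n, a n < b n) (h2 : ∀ n, b n < a (n + 1)) : StrictMono b :=
  strictMono_nat_of_lt_succ fun n => (h2 n).trans (h1 (n + 1))

lemma a_ne_b (h1 : ∀ n, a n < b n) (h2 : ∀ n, b n < a (n + 1)) (n m : ℕ) : a n ≠ b m := by
  rcases le_or_gt n m with h | h
  · exact ne_of_lt (lt_of_le_of_lt ((a_mono h1 h2).monotone h) (h1 m))
  · exact (ne_of_lt (lt_of_lt_of_le (h2 m) ((a_mono h1 h2).monotone h))).symm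

lemma r_eval_a (h1 : ∀ n, a n < b n) (h2 : ∀ n, b n < a (n + 1)) (n : ℕ) :
    r a b (a n) = w n := by
  classical
  unfold r
  rw [Finset.sum_eq_single n]
  · simp [(a_ne_b h1 h2 n n).symm]
  · intro k hk hkn
    have h1' : a k ≠ a n := fun h => hkn ((a_mono h1 h2).injective h)
    have h2' : b k ≠ a n := (a_ne_b h1 h2 n k).symm
    simp [h1', h2']
  · intro hn
    have hle : n ≤ a n := (a_mono h1 h2).le_apply
    exact absurd (Finset.mem_range.mpr (Nat.lt_succ_of_le hle)) hn

lemma key (h1 : ∀ n, a n < b n) (h2 : ∀ n, b n < a (n + 1)) (I : Set ℕ) (N : ℕ) :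
    ∑ i ∈ Finset.range N, Set.indicator I (r a b) i =
    ∑ n ∈ Finset.range N, cterm a b I N n := by
  classical
  have hr : ∀ i ∈ Finset.range N, r a b i =
      ∑ n ∈ Finset.range N, ((if a n = i then w n else 0) - (if b n = i then w n else 0)) := by
    intro i hi
    unfold r
    apply Finset.sum_subset (Finset.range_subset_range.mpr (Finset.mem_range.mp hi))
    intro n hn hn'
    have hin : i < n := by
      simp only [Finset.mem_range] at hn'
      omega
    have hla : n ≤ a n := (a_mono h1 h2).le_apply
    have hlb : n ≤ b n := (b_mono h1 h2).le_apply
    have ha : a n ≠ i := by omega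
    have hb : b n ≠ i := by omega
    simp [ha, hb]
  have step1 : ∀ i ∈ Finset.range N, Set.indicator I (r a b) i =
      ∑ n ∈ Finset.range N,
        (if i ∈ I then ((if a n = i then w n else 0) - (if b n = i then w n else 0)) else 0) := by
    intro i hi
    rw [Set.indicator_apply]
    by_cases hI : i ∈ I
    · rw [if_pos hI, hr i hi]
      exact Finset.sum_congr rfl fun n _ => by rw [if_pos hI]
    · rw [if_neg hI]
      exact (Finset.sum_eq_zero fun n _ => by rw [if_neg hI]).symm
  rw [Finset.sum_congr rfl step1, Finset.sum_comm]
  apply Finset.sum_congr rfl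
  intro n hn
  have hab : a n ≠ b n := a_ne_b h1 h2 n n
  have e1 : ∀ i ∈ Finset.range N,
      (if i ∈ I then ((if a n = i then w n else 0) - (if b n = i then w n else 0)) else 0)
      = (if i = a n then (if a n ∈ I then w n else 0) else 0)
        - (if i = b n then (if b n ∈ I then w n else 0) else 0) := by
    intro i _
    by_cases hA : i = a n
    · by_cases hI : a n ∈ I <;> simp [hA, hI, Ne.symm hab, hab]
    · by_cases hB : i = b n
      · by_cases hI : b n ∈ I <;> simp [hB, hI, hab, Ne.symm hab, hA]
      · by_cases hI : i ∈ I <;> simp [hI, hA, hB, Ne.symm hA, Ne.symm hB]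
  rw [Finset.sum_congr rfl e1, Finset.sum_sub_distrib,
    Finset.sum_ite_eq' (Finset.range N) (a n), Finset.sum_ite_eq' (Finset.range N) (b n)]
  simp only [Finset.mem_range, cterm]
  by_cases hA : a n ∈ I <;> by_cases hB : b n ∈ I <;>
    by_cases h4 : a n < N <;> by_cases h5 : b n < N <;>
      simp [hA, hB, h4, h5]

lemma conv (h1 : ∀ n, a n < b n) (h2 : ∀ n, b n < a (n + 1)) (I : Set ℕ) (M : ℕ)
    (hM : ∀ n, M ≤ n → (a n ∈ I ↔ b n ∈ I)) :
    Tendsto (fun N : ℕ => ∑ i ∈ Finset.range N, Set.indicator I (r a b) i) atTop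
      (nhds (∑ n ∈ Finset.range M, dterm a b I n)) := by
  classical
  rw [Metric.tendsto_atTop]
  intro ε hε
  obtain ⟨M', hM'⟩ := exists_nat_one_div_lt hε
  have hwM' : w M' < ε := by simpa [w] using hM'
  set K := max M M' with hK
  refine ⟨b K + 1, fun N hN => ?_⟩
  have hbKN : b K < N := by omega
  have hKb : K ≤ b K := (b_mono h1 h2).le_apply
  have hMN : M ≤ N := by
    have : M ≤ K := le_max_left _ _
    omega
  rw [Real.dist_eq, key h1 h2 I N]
  have hsplit : ∀ n ∈ Finset.range M, dterm a b I n = cterm a b I N n := by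
    intro n hn
    have hnM : n < M := Finset.mem_range.mp hn
    have hbn : b n < N := by
      have : b n ≤ b K := (b_mono h1 h2).monotone (le_trans (le_of_lt hnM) (le_max_left _ _))
      omega
    have han : a n < N := (h1 n).trans hbn
    simp [dterm, cterm, han, hbn]
  rw [Finset.sum_congr rfl hsplit]
  rw [Finset.range_eq_Ico,
    ← Finset.sum_Ico_consecutive (fun n => cterm a b I N n) (Nat.zero_le M) hMN,
    ← Finset.range_eq_Ico, add_sub_cancel_left]
  -- now bound |∑ n in Ico M N, cterm a b I N n| < ε
  have hc : ∀ n ∈ Finset.Ico M N, cterm a b I N n ≠ 0 →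
      a n < N ∧ N ≤ b n ∧ cterm a b I N n = w n := by
    intro n hn hne
    have hiff := hM n (Finset.mem_Ico.mp hn).1
    by_cases hA : a n ∈ I
    · have hB : b n ∈ I := hiff.mp hA
      by_cases h3 : b n < N
      · exact absurd (by simp [cterm, hA, hB, (h1 n).trans h3, h3]) hne
      · by_cases h4 : a n < N
        · exact ⟨h4, not_lt.mp h3, by simp [cterm, hA, hB, h4, h3]⟩
        · have h5 : ¬ b n < N := h3
          exact absurd (by simp [cterm, h4, h5]) hne
    · have hB : b n ∉ I := fun h => hA (hiff.mpr h)
      exact absurd (by simp [cterm, hA, hB]) hne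
  have huniq : ∀ n n', a n < N → N ≤ b n → a n' < N → N ≤ b n' → n = n' := by
    intro n n' u1 u2 u3 u4
    by_contra hne
    rcases lt_or_gt_of_ne hne with h | h
    · have : b n < a n' := lt_of_lt_of_le (h2 n) ((a_mono h1 h2).monotone h)
      omega
    · have : b n' < a n := lt_of_lt_of_le (h2 n') ((a_mono h1 h2).monotone h)
      omega
  by_cases hex : ∃ n ∈ Finset.Ico M N, cterm a b I N n ≠ 0
  · obtain ⟨n₀, hn₀, hne₀⟩ := hex
    obtain ⟨u1, u2, hval⟩ := hc n₀ hn₀ hne₀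
    have hsum : ∑ n ∈ Finset.Ico M N, cterm a b I N n = cterm a b I N n₀ := by
      apply Finset.sum_eq_single_of_mem n₀ hn₀
      intro n hn hnn
      by_contra hnz
      obtain ⟨v1, v2, _⟩ := hc n hn hnz
      exact hnn (huniq n n₀ v1 v2 u1 u2)
    rw [hsum, hval]
    have hn₀K : K < n₀ := by
      by_contra h
      push_neg at h
      have : b n₀ ≤ b K := (b_mono h1 h2).monotone h
      omega
    calc |w n₀| = w n₀ := abs_of_pos (w_pos n₀)
      _ ≤ w M' := w_le (by omega)
      _ < ε := hwM'
  · push_neg at hex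
    have hsum : ∑ n ∈ Finset.Ico M N, cterm a b I N n = 0 :=
      Finset.sum_eq_zero fun n hn => by
        by_contra h
        exact h (hex n hn ▸ rfl)
    rw [hsum]
    simpa using hε

end

noncomputable def seqA (A : Set (ℕ × ℕ)) (h : ∀ k : ℕ, ∃ p ∈ A, k ≤ p.1) : ℕ → ℕ × ℕ
  | 0 => (h 0).choose
  | n + 1 => (h ((seqA A h n).2 + 1)).choose

lemma seqA_mem (A : Set (ℕ × ℕ)) (h : ∀ k : ℕ, ∃ p ∈ A, k ≤ p.1) (n : ℕ) :
    seqA A h n ∈ A := by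
  cases n with
  | zero => exact (h 0).choose_spec.1
  | succ n => exact (h ((seqA A h n).2 + 1)).choose_spec.1

lemma seqA_lt (A : Set (ℕ × ℕ)) (h : ∀ k : ℕ, ∃ p ∈ A, k ≤ p.1) (n : ℕ) :
    (seqA A h n).2 < (seqA A h (n + 1)).1 := by
  have := (h ((seqA A h n).2 + 1)).choose_spec.2
  show (seqA A h n).2 < ((h ((seqA A h n).2 + 1)).choose).1
  omega

end SPairAux

/-- `𝔰_pair ≤ ß`; i.e. any family `𝓘` of infinite sets of
naturals such that every conditionally convergent series has a divergent
subseries indexed by a member of `𝓘` has cardinality at least `𝔰_pair`. -/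
theorem sPair_le_ss (𝓘 : Set (Set ℕ)) (hinf : ∀ I ∈ 𝓘, I.Infinite)
    (hss : ∀ r : ℕ → ℝ, CondConv r → ∃ I ∈ 𝓘, ¬ ∃ l : ℝ,
      Tendsto (fun N : ℕ => ∑ i ∈ Finset.range N, Set.indicator I r i)
        atTop (nhds l)) :
    sPair ≤ #𝓘 := by
  classical
  apply csInf_le'
  refine ⟨𝓘, hinf, ?_, rfl⟩
  intro A hA
  by_contra hno
  push_neg at hno
  obtain ⟨hlt, hub⟩ := hA
  set f := SPairAux.seqA A hub with hf
  set a : ℕ → ℕ := fun n => (f n).1 with ha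
  set b : ℕ → ℕ := fun n => (f n).2 with hb
  have hmem : ∀ n, f n ∈ A := SPairAux.seqA_mem A hub
  have h1 : ∀ n, a n < b n := fun n => hlt (f n) (hmem n)
  have h2 : ∀ n, b n < a (n + 1) := fun n => SPairAux.seqA_lt A hub n
  set r : ℕ → ℝ := SPairAux.r a b with hr
  have hcond : CondConv r := by
    constructor
    · refine ⟨0, ?_⟩
      have h := SPairAux.conv h1 h2 Set.univ 0 (fun n _ => by simp)
      simpa [Set.indicator_univ] using h
    · intro hs
      have h2s : Summable (fun n => |r (a n)|) :=
        hs.comp_injective (SPairAux.a_mono h1 h2).injective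
      have h3s : Summable (fun n : ℕ => SPairAux.w n) := by
        have : ∀ n : ℕ, |r (a n)| = SPairAux.w n := fun n => by
          rw [hr, SPairAux.r_eval_a h1 h2 n, abs_of_pos (SPairAux.w_pos n)]
        exact (summable_congr this).mp h2s
      have h4s : Summable (fun n : ℕ => 1 / ((n : ℝ) + 1)) := by
        simpa [SPairAux.w] using h3s
      have h5s : Summable (fun n : ℕ => 1 / (n : ℝ)) := by
        refine (summable_nat_add_iff 1).mp ?_
        simpa [Nat.cast_add, Nat.cast_one] using h4s
      exact Real.not_summable_one_div_natCast h5s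
  obtain ⟨I, hI𝓘, hdiv⟩ := hss r hcond
  have hfinA : {p ∈ A | ¬ (p.1 ∈ I ↔ p.2 ∈ I)}.Finite :=
    Set.not_infinite.mp (hno I hI𝓘)
  have hfinj : Function.Injective f := by
    intro n m hnm
    exact (SPairAux.a_mono h1 h2).injective (by rw [ha]; exact congrArg Prod.fst hnm)
  have hfin2 : {n : ℕ | ¬ (a n ∈ I ↔ b n ∈ I)}.Finite := by
    have hsub : {n : ℕ | ¬ (a n ∈ I ↔ b n ∈ I)} ⊆
        f ⁻¹' {p ∈ A | ¬ (p.1 ∈ I ↔ p.2 ∈ I)} := fun n hn => ⟨hmem n, hn⟩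
    exact (hfinA.preimage hfinj.injOn).subset hsub
  obtain ⟨m, hm⟩ := hfin2.bddAbove
  have hM : ∀ n, m + 1 ≤ n → (a n ∈ I ↔ b n ∈ I) := by
    intro n hn
    by_contra hc
    have := hm hc
    omega
  exact hdiv ⟨_, SPairAux.conv h1 h2 I (m + 1) hM⟩
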